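/- arXiv:1606.03931 — 2 statements merged into one kernel-verified Lean document; each statement's English description precedes it below -/
import Mathlib

section
/- Let A be an invertible n×n real matrix, 1 ≤ l < n, and let A_l be the n×l matrix of the first l columns of A. For every y ∈ ℝ^l, setting X = A_l y and U = X − P_l X, one has ‖A^{−1}U‖₂² = ‖y‖₂² + ‖A^{−1}P_l X‖₂², and moreover ‖A^{−1}P_l X‖₂² = Σ_{k=l+1}^n ⟨X, Y_k*⟩² = ‖B X‖₂². -/
open Matrix

noncomputable section

/-- `k`-th column of a matrix, as a vector of `EuclideanSpace ℝ (Fin n)`. -/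
def col {n m : ℕ} (A : Matrix (Fin n) (Fin m) ℝ) (k : Fin m) : EuclideanSpace ℝ (Fin n) :=
  WithLp.toLp 2 (fun i => A i k)

/-- A plain vector viewed in `EuclideanSpace ℝ (Fin n)`. -/
def toE {n : ℕ} (x : Fin n → ℝ) : EuclideanSpace ℝ (Fin n) := WithLp.toLp 2 x

/-- The `n × l` matrix of the first `l` columns of `A` (junk `0` columns if `l > n`). -/
def firstCols {n : ℕ} (A : Matrix (Fin n) (Fin n) ℝ) (l : ℕ) : Matrix (Fin n) (Fin l) ℝ :=
  fun i j => if h : (j : ℕ) < n then A i ⟨j, h⟩ else 0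

/-- The `n × (n-l)` matrix of the last `n - l` columns of `A`. -/
def lastCols {n : ℕ} (A : Matrix (Fin n) (Fin n) ℝ) (l : ℕ) : Matrix (Fin n) (Fin (n - l)) ℝ :=
  fun i j => A i ⟨l + j, by have := j.isLt; omega⟩

/-- `H_l`: the span of the last `n - l` columns of `A`, i.e. the columns `X_k` with
(0-based) index `k ≥ l` (paper's 1-based indices `k > l`). -/
def Hspan {n : ℕ} (A : Matrix (Fin n) (Fin n) ℝ) (l : ℕ) :
    Submodule ℝ (EuclideanSpace ℝ (Fin n)) :=
  Submodule.span ℝ (col A '' {k | l ≤ (k : ℕ)})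

/-- `H_{l,k}`: the span of the columns `X_j` with (0-based) index `j ≥ l`, `j ≠ k`. -/
def Hspan' {n : ℕ} (A : Matrix (Fin n) (Fin n) ℝ) (l : ℕ) (k : Fin n) :
    Submodule ℝ (EuclideanSpace ℝ (Fin n)) :=
  Submodule.span ℝ (col A '' {j | l ≤ (j : ℕ) ∧ j ≠ k})

/-- `Y_k* = P_l X_k*`, where `X_k*` is the `k`-th column of `(A⁻¹)ᵀ` and `P_l` is the
orthogonal projection onto `H_l`. -/
def Ystar {n : ℕ} (A : Matrix (Fin n) (Fin n) ℝ) (l : ℕ) (k : Fin n) :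
    EuclideanSpace ℝ (Fin n) :=
  ↑(Submodule.orthogonalProjectionOnto (Hspan A l) (col A⁻¹ᵀ k))

/-- The `(n-l) × n` matrix `B` whose rows are `(Y_k*)ᵀ` for `k` ranging over the last
`n - l` indices. -/
def Bmat {n : ℕ} (A : Matrix (Fin n) (Fin n) ℝ) (l : ℕ) : Matrix (Fin (n - l)) (Fin n) ℝ :=
  fun r i => Ystar A l ⟨l + r, by have := r.isLt; omega⟩ i

/-- Squared Hilbert–Schmidt (Frobenius) norm of a matrix. -/
def hsNormSq {n m : ℕ} (B : Matrix (Fin m) (Fin n) ℝ) : ℝ :=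
  ∑ r, ∑ i, (B r i) ^ 2

/-- Hilbert–Schmidt (Frobenius) norm of a matrix. -/
def hsNorm {n m : ℕ} (B : Matrix (Fin m) (Fin n) ℝ) : ℝ :=
  Real.sqrt (hsNormSq B)

/-- Operator (`ℓ² → ℓ²`) norm of a matrix, as the supremum of `‖Bx‖₂` over the unit
sphere. -/
def opNorm {n m : ℕ} (B : Matrix (Fin m) (Fin n) ℝ) : ℝ :=
  sSup ((fun x : EuclideanSpace ℝ (Fin n) => ‖toE (B *ᵥ fun i => x i)‖) '' {x | ‖x‖ = 1})

open scoped RealInnerProductSpace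

lemma inner_toE {n : ℕ} (v w : EuclideanSpace ℝ (Fin n)) : ⟪v, w⟫ = ∑ i, v i * w i := by
  simp [PiLp.inner_apply, RCLike.inner_apply, mul_comm]

lemma normsq_toE {n : ℕ} (v : Fin n → ℝ) : ‖toE v‖ ^ 2 = ∑ i, v i ^ 2 := by
  rw [← real_inner_self_eq_norm_sq, inner_toE]
  simp [sq, toE]

lemma mulVec_inv_eq_inner {n : ℕ} (A : Matrix (Fin n) (Fin n) ℝ) (v : Fin n → ℝ) (k : Fin n) :
    (A⁻¹ *ᵥ v) k = ⟪toE v, col A⁻¹ᵀ k⟫ := by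
  rw [inner_toE]
  simp [Matrix.mulVec, dotProduct, toE, _root_.col, Matrix.transpose_apply, mul_comm]

lemma inner_col_colstar {n : ℕ} (A : Matrix (Fin n) (Fin n) ℝ) (hA : IsUnit A) (j k : Fin n) :
    ⟪_root_.col A j, _root_.col A⁻¹ᵀ k⟫ = if k = j then (1 : ℝ) else 0 := by
  have h1 : A⁻¹ * A = 1 := Matrix.nonsing_inv_mul A ((Matrix.isUnit_iff_isUnit_det A).mp hA)
  have := congrArg (fun M => M k j) h1
  simp only [Matrix.mul_apply, Matrix.one_apply] at this
  rw [inner_toE]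
  rw [← this]
  simp [_root_.col, Matrix.transpose_apply, mul_comm, mul_assoc]


lemma hspan_inner_zero {n l : ℕ} (A : Matrix (Fin n) (Fin n) ℝ) (hA : IsUnit A)
    (k : Fin n) (hk : (k : ℕ) < l) {w : EuclideanSpace ℝ (Fin n)} (hw : w ∈ Hspan A l) :
    ⟪w, col A⁻¹ᵀ k⟫ = 0 := by
  induction hw using Submodule.span_induction with
  | mem x hx =>
    obtain ⟨j, hj, rfl⟩ := hx
    rw [inner_col_colstar A hA]
    have : k ≠ j := fun h => by simp only [Set.mem_setOf_eq] at hj; omega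
    simp [this]
  | zero => simp
  | add x y _ _ hx hy => rw [inner_add_left, hx, hy]; ring
  | smul c x _ hx => rw [real_inner_smul_left, hx]; ring

lemma X_decomp {n l : ℕ} (hln : l ≤ n) (A : Matrix (Fin n) (Fin n) ℝ) (y : Fin l → ℝ) :
    toE (firstCols A l *ᵥ y) = ∑ j : Fin l, y j • _root_.col A ⟨j.1, lt_of_lt_of_le j.isLt hln⟩ := by
  ext i
  simp only [toE, Matrix.mulVec, dotProduct, firstCols]
  rw [WithLp.ofLp_sum, Finset.sum_apply]
  refine Finset.sum_congr rfl fun j _ => ?_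
  have hj : (j : ℕ) < n := lt_of_lt_of_le j.isLt hln
  rw [dif_pos hj]
  exact mul_comm _ _

lemma X_inner_colstar {n l : ℕ} (hln : l ≤ n) (A : Matrix (Fin n) (Fin n) ℝ) (hA : IsUnit A)
    (y : Fin l → ℝ) (k : Fin n) :
    ⟪toE (firstCols A l *ᵥ y), col A⁻¹ᵀ k⟫ =
      if h : (k : ℕ) < l then y ⟨k, h⟩ else 0 := by
  rw [X_decomp hln A y, sum_inner]
  simp only [real_inner_smul_left, inner_col_colstar A hA]
  by_cases h : (k : ℕ) < l
  · rw [dif_pos h, Finset.sum_eq_single ⟨k.1, h⟩]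
    · simp
    · intro j _ hj
      have : k ≠ (⟨j.1, lt_of_lt_of_le j.isLt hln⟩ : Fin n) := by
        intro hc
        exact hj (Fin.ext (congrArg Fin.val hc).symm)
      simp [this]
    · simp
  · rw [dif_neg h]
    refine Finset.sum_eq_zero fun j _ => ?_
    have : k ≠ (⟨j.1, lt_of_lt_of_le j.isLt hln⟩ : Fin n) := by
      intro hc
      have h2 : (k : ℕ) = j.1 := congrArg Fin.val hc
      have := j.isLt
      omega
    simp [this]

lemma filter_lt_eq_map {n l : ℕ} (hln : l ≤ n) :
    Finset.univ.filter (fun k : Fin n => (k : ℕ) < l) =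
    Finset.univ.map ⟨fun j : Fin l => (⟨j.1, lt_of_lt_of_le j.isLt hln⟩ : Fin n),
      fun a b h => by
        apply Fin.ext
        have h2 := congrArg Fin.val h
        simp only [Fin.val_mk] at h2
        exact h2⟩ := by
  ext k
  simp only [Finset.mem_filter, Finset.mem_univ, true_and, Finset.mem_map,
    Function.Embedding.coeFn_mk]
  constructor
  · intro hk; exact ⟨⟨k.1, hk⟩, Fin.ext rfl⟩
  · rintro ⟨j, -, rfl⟩; exact j.isLt

lemma filter_ge_eq_map {n l : ℕ} (hln : l ≤ n) :
    Finset.univ.filter (fun k : Fin n => l ≤ (k : ℕ)) =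
    Finset.univ.map ⟨fun r : Fin (n - l) => (⟨l + r.1, by have := r.isLt; omega⟩ : Fin n),
      fun a b h => by
        apply Fin.ext
        have h2 := congrArg Fin.val h
        simp only [Fin.val_mk] at h2
        omega⟩ := by
  ext k
  simp only [Finset.mem_filter, Finset.mem_univ, true_and, Finset.mem_map,
    Function.Embedding.coeFn_mk]
  constructor
  · intro hk
    have hk2 : k.1 - l < n - l := by have := k.isLt; omega
    exact ⟨⟨k.1 - l, hk2⟩, Fin.ext (by show l + (k.1 - l) = k.1; omega)⟩
  · rintro ⟨r, -, rfl⟩; exact Nat.le_add_right l r.1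

/-- **Key identity of the proof.** For an invertible `n × n` matrix `A`, `1 ≤ l < n` and
`y ∈ ℝ^l`, with `X = A_l y` and `U = X - P_l X`:
`‖A⁻¹U‖₂² = ‖y‖₂² + ‖A⁻¹ P_l X‖₂²`, and
`‖A⁻¹ P_l X‖₂² = Σ_{k>l} ⟪X, Y_k*⟫² = ‖B X‖₂²`. -/
theorem inv_apply_perp_component_sq (n l : ℕ) (hl : 1 ≤ l) (hln : l < n)
    (A : Matrix (Fin n) (Fin n) ℝ) (hA : IsUnit A) (y : EuclideanSpace ℝ (Fin l))
    (X PlX U : EuclideanSpace ℝ (Fin n))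
    (hX : X = toE (firstCols A l *ᵥ fun j => y j))
    (hP : PlX = ↑(Submodule.orthogonalProjectionOnto (Hspan A l) X))
    (hU : U = X - PlX) :
    ‖toE (A⁻¹ *ᵥ fun i => U i)‖ ^ 2 = ‖y‖ ^ 2 + ‖toE (A⁻¹ *ᵥ fun i => PlX i)‖ ^ 2 ∧
    ‖toE (A⁻¹ *ᵥ fun i => PlX i)‖ ^ 2 =
      ∑ k ∈ Finset.univ.filter (fun k : Fin n => l ≤ (k : ℕ)), ⟪X, Ystar A l k⟫ ^ 2 ∧
    (∑ k ∈ Finset.univ.filter (fun k : Fin n => l ≤ (k : ℕ)), ⟪X, Ystar A l k⟫ ^ 2) =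
      ‖toE (Bmat A l *ᵥ fun i => X i)‖ ^ 2 := by
  have hPmem : PlX ∈ Hspan A l := hP ▸ (Submodule.orthogonalProjectionOnto (Hspan A l) X).2
  have hUorth : X - PlX ∈ (Hspan A l)ᗮ := hP ▸ Submodule.sub_starProjection_mem_orthogonal (K := Hspan A l) X
  have hb : ∀ k, (A⁻¹ *ᵥ fun i => PlX i) k = ⟪PlX, col A⁻¹ᵀ k⟫ := fun k =>
    mulVec_inv_eq_inner A (fun i => PlX i) k
  have ha : ∀ k, (A⁻¹ *ᵥ fun i => U i) k = ⟪X, col A⁻¹ᵀ k⟫ - ⟪PlX, col A⁻¹ᵀ k⟫ := by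
    intro k
    rw [mulVec_inv_eq_inner A (fun i => U i) k]
    have : toE (fun i => U i) = X - PlX := hU
    rw [this, inner_sub_left]
  have hb0 : ∀ k : Fin n, (k : ℕ) < l → ⟪PlX, col A⁻¹ᵀ k⟫ = 0 := fun k hk =>
    hspan_inner_zero A hA k hk hPmem
  have hXin : ∀ k, ⟪X, col A⁻¹ᵀ k⟫ = if h : (k : ℕ) < l then y ⟨k, h⟩ else 0 := by
    intro k
    rw [hX]
    exact X_inner_colstar hln.le A hA _ k
  have hY : ∀ k, ⟪X, Ystar A l k⟫ = ⟪PlX, col A⁻¹ᵀ k⟫ := by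
    intro k
    have hYmem : Ystar A l k ∈ Hspan A l :=
      (Submodule.orthogonalProjectionOnto (Hspan A l) (col A⁻¹ᵀ k)).2
    have h1 : ⟪X - PlX, Ystar A l k⟫ = 0 :=
      Submodule.inner_left_of_mem_orthogonal hYmem hUorth
    have h2 : ⟪PlX, _root_.col A⁻¹ᵀ k - Ystar A l k⟫ = 0 :=
      Submodule.inner_right_of_mem_orthogonal hPmem
        (Submodule.sub_starProjection_mem_orthogonal (K := Hspan A l) (_root_.col A⁻¹ᵀ k))
    rw [inner_sub_left] at h1
    rw [inner_sub_right] at h2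
    linarith
  have hfilt : Finset.univ.filter (fun k : Fin n => ¬ (k : ℕ) < l) =
      Finset.univ.filter (fun k : Fin n => l ≤ (k : ℕ)) := by
    ext k; simp [not_lt]
  have hbfull : ∑ k, ((A⁻¹ *ᵥ fun i => PlX i) k) ^ 2 =
      ∑ k ∈ Finset.univ.filter (fun k : Fin n => l ≤ (k : ℕ)),
        ⟪PlX, col A⁻¹ᵀ k⟫ ^ 2 := by
    rw [← Finset.sum_filter_add_sum_filter_not Finset.univ (fun k : Fin n => (k : ℕ) < l)
      (fun k => ((A⁻¹ *ᵥ fun i => PlX i) k) ^ 2)]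
    have h0 : ∑ k ∈ Finset.univ.filter (fun k : Fin n => (k : ℕ) < l),
        ((A⁻¹ *ᵥ fun i => PlX i) k) ^ 2 = 0 := by
      refine Finset.sum_eq_zero fun k hk => ?_
      rw [hb k, hb0 k (Finset.mem_filter.mp hk).2]
      ring
    rw [h0, zero_add, hfilt]
    exact Finset.sum_congr rfl fun k _ => by rw [hb k]
  refine ⟨?_, ?_, ?_⟩
  · rw [normsq_toE, normsq_toE, hbfull]
    have hy : ‖y‖ ^ 2 = ∑ j : Fin l, y j ^ 2 := normsq_toE y
    rw [hy]
    rw [← Finset.sum_filter_add_sum_filter_not Finset.univ (fun k : Fin n => (k : ℕ) < l)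
      (fun k => ((A⁻¹ *ᵥ fun i => U i) k) ^ 2)]
    congr 1
    · rw [filter_lt_eq_map hln.le, Finset.sum_map]
      refine Finset.sum_congr rfl fun j _ => ?_
      simp only [Function.Embedding.coeFn_mk]
      rw [ha, hXin, hb0 _ j.isLt, dif_pos (by exact j.isLt)]
      norm_num
      rfl
    · rw [hfilt]
      refine Finset.sum_congr rfl fun k hk => ?_
      have hk' : l ≤ (k : ℕ) := (Finset.mem_filter.mp hk).2
      rw [ha, hXin, dif_neg (by omega)]
      ring
  · rw [normsq_toE, hbfull]
    exact Finset.sum_congr rfl fun k _ => by rw [hY k]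
  · rw [normsq_toE]
    rw [filter_ge_eq_map hln.le, Finset.sum_map]
    refine Finset.sum_congr rfl fun r _ => ?_
    simp only [Function.Embedding.coeFn_mk]
    congr 1

end
end

section
/- Let A be an invertible n×n real matrix and 1 ≤ l < n, and let A_{n−l} be the n×(n−l) matrix of the last n−l columns of A. Then the operator norm of B equals the reciprocal of the smallest singular value of A_{n−l}: ‖B‖ = 1 / s_{min}(A_{n−l}), where s_{min}(A_{n−l}) = min_{z ∈ S^{n−l−1}} ‖A_{n−l} z‖₂. -/
open Matrix

noncomputable section

open scoped RealInnerProductSpace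

section Aux
variable {n : ℕ} (A : Matrix (Fin n) (Fin n) ℝ) (l : ℕ)

lemma inner_eq_sum (x y : EuclideanSpace ℝ (Fin n)) : ⟪x, y⟫ = ∑ i, x i * y i := by
  simp [PiLp.inner_apply, RCLike.inner_apply, mul_comm]

lemma col_mem_Hspan (j : Fin n) (hj : l ≤ (j : ℕ)) : _root_.col A j ∈ Hspan A l :=
  Submodule.subset_span ⟨j, hj, rfl⟩

lemma Ystar_mem (k : Fin n) : Ystar A l k ∈ Hspan A l :=
  SetLike.coe_mem (Submodule.orthogonalProjectionOnto (Hspan A l) (_root_.col A⁻¹ᵀ k))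

lemma inner_Ystar_col (hA : IsUnit A) (k j : Fin n) (hj : l ≤ (j : ℕ)) :
    ⟪Ystar A l k, _root_.col A j⟫ = if k = j then (1:ℝ) else 0 := by
  have h1 : ⟪_root_.col A⁻¹ᵀ k - Ystar A l k, _root_.col A j⟫ = 0 :=
    Submodule.starProjection_inner_eq_zero _ _ (col_mem_Hspan A l j hj)
  rw [inner_sub_left, sub_eq_zero] at h1
  rw [← h1]
  have h2 : ⟪_root_.col A⁻¹ᵀ k, _root_.col A j⟫ = (A⁻¹ * A) k j := by
    rw [inner_eq_sum, Matrix.mul_apply]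
    simp [_root_.col, Matrix.transpose_apply, WithLp.ofLp_toLp]
  rw [h2, Matrix.nonsing_inv_mul A ((Matrix.isUnit_iff_isUnit_det A).mp hA), Matrix.one_apply]

/-- The `r`-th entry of `B x` is the inner product of `Y_{l+r}*` with `x`. -/
lemma Bmat_mulVec_apply (x : Fin n → ℝ) (r : Fin (n - l)) :
    (Bmat A l *ᵥ x) r = ⟪Ystar A l ⟨l + r, by have := r.isLt; omega⟩, toE x⟫ := by
  rw [inner_eq_sum]
  simp [Matrix.mulVec, dotProduct, Bmat, toE, WithLp.ofLp_toLp]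

/-- `B ∘ A_{n-l} = id`. -/
lemma Bmat_mulVec_lastCols (hA : IsUnit A) (z : Fin (n - l) → ℝ) :
    Bmat A l *ᵥ (lastCols A l *ᵥ z) = z := by
  funext r
  have key : ∀ j : Fin (n - l),
      ∑ i, Ystar A l ⟨l + r, by have := r.isLt; omega⟩ i * A i ⟨l + j, by have := j.isLt; omega⟩
        = if r = j then (1:ℝ) else 0 := by
    intro j
    have h := inner_Ystar_col A l hA ⟨l + r, by have := r.isLt; omega⟩
      ⟨l + j, by have := j.isLt; omega⟩ (by simp)
    rw [inner_eq_sum] at h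
    simp only [_root_.col, WithLp.ofLp_toLp] at h
    rw [h]
    congr 1
    simp only [Fin.mk.injEq, eq_iff_iff, Fin.ext_iff]
    omega
  calc (Bmat A l *ᵥ (lastCols A l *ᵥ z)) r
      = ∑ i, Ystar A l ⟨l + r, by have := r.isLt; omega⟩ i *
          ∑ j : Fin (n - l), A i ⟨l + (j:ℕ), by have := j.isLt; omega⟩ * z j := by
        simp [Matrix.mulVec, dotProduct, Bmat, lastCols]
    _ = ∑ j : Fin (n - l), (∑ i, Ystar A l ⟨l + r, by have := r.isLt; omega⟩ i *
          A i ⟨l + (j:ℕ), by have := j.isLt; omega⟩) * z j := by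
        simp_rw [Finset.mul_sum, Finset.sum_mul]
        rw [Finset.sum_comm]
        simp_rw [mul_assoc]
    _ = ∑ j : Fin (n - l), (if r = j then (1:ℝ) else 0) * z j := by
        simp_rw [key]
    _ = z r := by
        simp [ite_mul, Finset.sum_ite_eq]

end Aux

section Main2
variable {n : ℕ} (A : Matrix (Fin n) (Fin n) ℝ) (l : ℕ)

lemma proj_norm_le (K : Submodule ℝ (EuclideanSpace ℝ (Fin n))) (v : EuclideanSpace ℝ (Fin n)) :
    ‖(Submodule.orthogonalProjectionOnto K v : EuclideanSpace ℝ (Fin n))‖ ≤ ‖v‖ := by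
  calc ‖(Submodule.orthogonalProjectionOnto K v : EuclideanSpace ℝ (Fin n))‖
      = ‖Submodule.orthogonalProjectionOnto K v‖ := rfl
    _ ≤ ‖Submodule.orthogonalProjectionOnto K‖ * ‖v‖ := (Submodule.orthogonalProjectionOnto K).le_opNorm v
    _ ≤ 1 * ‖v‖ := by
        have := Submodule.orthogonalProjectionOnto_norm_le K
        have h0 : (0:ℝ) ≤ ‖v‖ := norm_nonneg v
        nlinarith
    _ = ‖v‖ := one_mul _

/-- The linear map `z ↦ A_{n-l} z` between Euclidean spaces. -/
def Tmap : EuclideanSpace ℝ (Fin (n - l)) →ₗ[ℝ] EuclideanSpace ℝ (Fin n) where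
  toFun z := toE (lastCols A l *ᵥ fun j => z j)
  map_add' x y := by
    ext i
    simp [toE, Matrix.mulVec, dotProduct, mul_add, Finset.sum_add_distrib, WithLp.ofLp_toLp]
  map_smul' c x := by
    ext i
    simp only [toE, WithLp.ofLp_toLp, WithLp.ofLp_smul, Matrix.mulVec, dotProduct, RingHom.id_apply, PiLp.smul_apply,
      smul_eq_mul, Finset.mul_sum]
    congr 1
    funext j
    ring

lemma Hspan_le_range : Hspan A l ≤ LinearMap.range (Tmap A l) := by
  rw [Hspan, Submodule.span_le]
  rintro _ ⟨k, hk, rfl⟩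
  have hk' : (k : ℕ) - l < n - l := by have := k.isLt; simp at hk; omega
  refine ⟨toE (Pi.single ⟨(k : ℕ) - l, hk'⟩ 1), ?_⟩
  ext i
  simp only [Tmap, LinearMap.coe_mk, AddHom.coe_mk, toE, WithLp.ofLp_toLp, Matrix.mulVec, dotProduct,
    Pi.single_apply, mul_ite, mul_one, mul_zero, Finset.sum_ite_eq', Finset.mem_univ, if_true]
  show lastCols A l i _ = _root_.col A k i
  simp only [lastCols, _root_.col, WithLp.ofLp_toLp]
  congr 1
  simp at hk
  exact Fin.ext (by simp; omega)

lemma Bmat_mulVec_proj (x : EuclideanSpace ℝ (Fin n)) :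
    (Bmat A l *ᵥ fun i => x i) =
      (Bmat A l *ᵥ fun i =>
        (Submodule.orthogonalProjectionOnto (Hspan A l) x : EuclideanSpace ℝ (Fin n)) i) := by
  funext r
  have e1 := Bmat_mulVec_apply A l (fun i => x i) r
  have e2 := Bmat_mulVec_apply A l
    (fun i => (Submodule.orthogonalProjectionOnto (Hspan A l) x : EuclideanSpace ℝ (Fin n)) i) r
  rw [e1, e2]
  have hx := Submodule.sub_starProjection_mem_orthogonal (K := Hspan A l) x
  have h0 : ⟪Ystar A l ⟨l + r, by have := r.isLt; omega⟩,
      x - ↑(Submodule.orthogonalProjectionOnto (Hspan A l) x)⟫ = 0 :=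
    (Submodule.mem_orthogonal _ _).1 hx _ (Ystar_mem A l _)
  rw [inner_sub_right] at h0
  have : toE (fun i => x i) = x := rfl
  rw [this]
  have : toE (fun i => (Submodule.orthogonalProjectionOnto (Hspan A l) x : EuclideanSpace ℝ (Fin n)) i)
      = (Submodule.orthogonalProjectionOnto (Hspan A l) x : EuclideanSpace ℝ (Fin n)) := rfl
  rw [this]
  linarith

end Main2

/-- **Step 1.2.2 identity.**-/
theorem opNorm_Bmat_eq_inv_smin (n l : ℕ) (hl : 1 ≤ l) (hln : l < n)
    (A : Matrix (Fin n) (Fin n) ℝ) (hA : IsUnit A) :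
    opNorm (Bmat A l) =
      1 / sInf ((fun z : EuclideanSpace ℝ (Fin (n - l)) =>
          ‖toE (lastCols A l *ᵥ fun j => z j)‖) '' {z | ‖z‖ = 1}) := by
  classical
  have hnl : 0 < n - l := by omega
  set g : EuclideanSpace ℝ (Fin (n - l)) → ℝ :=
    fun z => ‖toE (lastCols A l *ᵥ fun j => z j)‖ with hg
  set S1 : Set (EuclideanSpace ℝ (Fin (n - l))) := {z | ‖z‖ = 1} with hS1
  have hgT : ∀ z, g z = ‖Tmap A l z‖ := fun z => rfl
  have hS1sphere : S1 = Metric.sphere (0 : EuclideanSpace ℝ (Fin (n - l))) 1 := by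
    ext z; simp [hS1]
  have hcomp : IsCompact S1 := hS1sphere ▸ isCompact_sphere _ _
  have hne : S1.Nonempty := by
    refine ⟨EuclideanSpace.single ⟨0, hnl⟩ (1 : ℝ), ?_⟩
    simp [hS1, EuclideanSpace.norm_single]
  have hcont : ContinuousOn g S1 := by
    have hc : Continuous fun z : EuclideanSpace ℝ (Fin (n - l)) => ‖Tmap A l z‖ :=
      ((Tmap A l).continuous_of_finiteDimensional).norm
    exact hc.continuousOn
  obtain ⟨z₀, hz₀S, hz₀⟩ := hcomp.exists_sInf_image_eq hne hcont
  set m := sInf (g '' S1) with hm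
  have hz₀n : ‖z₀‖ = 1 := hz₀S
  have hmz : m = ‖Tmap A l z₀‖ := by rw [hz₀, hgT]
  -- `B (T z) = z`
  have hBT : ∀ z : EuclideanSpace ℝ (Fin (n - l)),
      (Bmat A l *ᵥ fun i => (Tmap A l z) i) = fun j => z j :=
    fun z => Bmat_mulVec_lastCols A l hA (fun j => z j)
  have hmpos : 0 < m := by
    rw [hmz, norm_pos_iff]
    intro h
    have h2 := hBT z₀
    rw [h] at h2
    have hz0 : z₀ = 0 := by
      have : (fun j => z₀ j) = (fun _ => (0:ℝ)) := by
        rw [← h2]; funext r; simp [Matrix.mulVec, dotProduct]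
      ext j; exact congrFun this j
    rw [hz0] at hz₀n; simp at hz₀n
  have hbdd : BddBelow (g '' S1) := ⟨0, by rintro _ ⟨z, _, rfl⟩; exact norm_nonneg _⟩
  have hlow : ∀ z : EuclideanSpace ℝ (Fin (n - l)), m * ‖z‖ ≤ ‖Tmap A l z‖ := by
    intro z
    rcases eq_or_ne z 0 with rfl | hz
    · simp
    · have hzn : ‖z‖ ≠ 0 := norm_ne_zero_iff.2 hz
      have h1 : g (‖z‖⁻¹ • z) ∈ g '' S1 :=
        ⟨_, by simp [hS1, norm_smul, abs_of_nonneg (inv_nonneg.2 (norm_nonneg z)),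
          inv_mul_cancel₀ hzn], rfl⟩
      have h2 := csInf_le hbdd h1
      rw [hgT, LinearMap.map_smul, norm_smul] at h2
      have h3 : ‖(‖z‖⁻¹ : ℝ)‖ = ‖z‖⁻¹ := by
        rw [Real.norm_eq_abs, abs_of_nonneg (inv_nonneg.2 (norm_nonneg z))]
      rw [h3] at h2
      have hzpos : 0 < ‖z‖ := lt_of_le_of_ne (norm_nonneg z) (Ne.symm hzn)
      calc m * ‖z‖ ≤ (‖z‖⁻¹ * ‖Tmap A l z‖) * ‖z‖ := by nlinarith
        _ = ‖Tmap A l z‖ := by field_simp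
  have hub : ∀ y ∈ (fun x : EuclideanSpace ℝ (Fin n) =>
      ‖toE (Bmat A l *ᵥ fun i => x i)‖) '' {x | ‖x‖ = 1}, y ≤ 1 / m := by
    rintro _ ⟨x, hx, rfl⟩
    obtain ⟨z, hz⟩ := Hspan_le_range A l (SetLike.coe_mem (Submodule.orthogonalProjectionOnto (Hspan A l) x))
    have hBx : toE (Bmat A l *ᵥ fun i => x i) = z := by
      have e1 := Bmat_mulVec_proj A l x
      have e2 : (fun i => (Submodule.orthogonalProjectionOnto (Hspan A l) x : EuclideanSpace ℝ (Fin n)) i)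
          = fun i => (Tmap A l z) i := by rw [hz]
      have : toE (Bmat A l *ᵥ fun i => x i) = toE (Bmat A l *ᵥ fun i => (Tmap A l z) i) := by
        rw [e1, e2]
      rw [this, hBT z]
      rfl
    show ‖toE (Bmat A l *ᵥ fun i => x i)‖ ≤ 1 / m
    rw [hBx]
    have hTz : ‖Tmap A l z‖ ≤ 1 := by
      rw [hz]
      calc ‖(Submodule.orthogonalProjectionOnto (Hspan A l) x : EuclideanSpace ℝ (Fin n))‖ ≤ ‖x‖ :=
            proj_norm_le _ x
        _ = 1 := hx
    have h4 := hlow z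
    rw [le_div_iff₀ hmpos]
    nlinarith
  have hmem : (1 / m) ∈ (fun x : EuclideanSpace ℝ (Fin n) =>
      ‖toE (Bmat A l *ᵥ fun i => x i)‖) '' {x | ‖x‖ = 1} := by
    refine ⟨m⁻¹ • Tmap A l z₀, ?_, ?_⟩
    · show ‖m⁻¹ • Tmap A l z₀‖ = 1
      rw [norm_smul, ← hmz, Real.norm_eq_abs, abs_of_pos (inv_pos.2 hmpos),
        inv_mul_cancel₀ hmpos.ne']
    · show ‖toE (Bmat A l *ᵥ fun i => (m⁻¹ • Tmap A l z₀) i)‖ = 1 / m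
      have e0 : (fun i => (m⁻¹ • Tmap A l z₀) i) = m⁻¹ • (fun i => (Tmap A l z₀) i) := rfl
      rw [e0, Matrix.mulVec_smul, hBT z₀]
      have e1 : toE (m⁻¹ • fun j => z₀ j) = m⁻¹ • z₀ := rfl
      rw [e1, norm_smul, hz₀n, Real.norm_eq_abs, abs_of_pos (inv_pos.2 hmpos), mul_one, one_div]
  rw [opNorm]
  exact IsGreatest.csSup_eq ⟨hmem, hub⟩

end
end
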